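/- Let $(X_t)$ be a Markov chain on finite state space $V$, $W \subseteq V$ with $|W|=m$ and $X_0 \notin W$, and let $\lambda = 1 - \max\{p(v,w) : v \in V,\; v \ne w \in W\} > 0$. With $L \ge 1$, define for each $w \in W$: $H_w(t) = \prod_{i=0}^t(1-p(X_i,w))$, $r_w = \min\{t : H_w(t) < \lambda/L\}$, and the martingale $\xi^w_s = \mathbf{1}\{T_w > s\wedge r_w\}/H_w(s\wedge r_w - 1)$. Let $\xi_s = \sum_{w\in W}\xi^w_s$. Then for every $s \ge 1$, $|\xi_s - \xi_{s-1}| \le L/\lambda^2$. -/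

import Mathlib

open Finset

/-- `HmP p ω w t = ∏_{i<t} (1 - p(ω_i,w))`, i.e. `H_w(t-1)` with `H_w(-1)=1`. -/
noncomputable def HmP {V : Type*} (p : V → V → ℝ) (ω : ℕ → V) (w : V) (t : ℕ) : ℝ :=
  ∏ i ∈ Finset.range t, (1 - p (ω i) w)

/-- `minSR p lam L ω w s = min s r_w`, where
`r_w = min{t : H_w(t) < lam/L}` (`= ∞` if no such `t`). -/
noncomputable def minSR {V : Type*} (p : V → V → ℝ) (lam L : ℝ)
    (ω : ℕ → V) (w : V) (s : ℕ) : ℕ :=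
  sInf ({t : ℕ | HmP p ω w (t + 1) < lam / L} ∪ {s})

open scoped Classical in
/-- `ξ_s = ∑_{w∈W} 1{T_w > s ∧ r_w}/H_w(s ∧ r_w - 1)` evaluated on the
trajectory `ω`. -/
noncomputable def xiSum {V : Type*} (p : V → V → ℝ) (W : Finset V) (lam L : ℝ)
    (ω : ℕ → V) (s : ℕ) : ℝ :=
  ∑ w ∈ W, (if ∀ t ≤ minSR p lam L ω w s, ω t ≠ w then (1 : ℝ) else 0) /
      HmP p ω w (minSR p lam L ω w s)

open scoped Classical in
/-- single term of `xiSum`. -/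
noncomputable def xiTerm {V : Type*} (p : V → V → ℝ) (lam L : ℝ)
    (ω : ℕ → V) (w : V) (s : ℕ) : ℝ :=
  (if ∀ t ≤ minSR p lam L ω w s, ω t ≠ w then (1 : ℝ) else 0) /
      HmP p ω w (minSR p lam L ω w s)

lemma xiSum_eq_sum_xiTerm {V : Type*} (p : V → V → ℝ) (W : Finset V) (lam L : ℝ)
    (ω : ℕ → V) (s : ℕ) :
    xiSum p W lam L ω s = ∑ w ∈ W, xiTerm p lam L ω w s := rfl

lemma HmP_nonneg {V : Type*} (p : V → V → ℝ) (hp1 : ∀ u x : V, p u x ≤ 1)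
    (ω : ℕ → V) (w : V) (t : ℕ) : 0 ≤ HmP p ω w t :=
  Finset.prod_nonneg fun i _ => by linarith [hp1 (ω i) w]

lemma HmP_succ {V : Type*} (p : V → V → ℝ) (ω : ℕ → V) (w : V) (k : ℕ) :
    HmP p ω w (k + 1) = HmP p ω w k * (1 - p (ω k) w) := by
  unfold HmP
  exact Finset.prod_range_succ _ _

lemma minSR_le_self {V : Type*} (p : V → V → ℝ) (lam L : ℝ)
    (ω : ℕ → V) (w : V) (s : ℕ) : minSR p lam L ω w s ≤ s :=
  Nat.sInf_le (Set.mem_union_right _ rfl)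

lemma minSR_eq_self {V : Type*} (p : V → V → ℝ) {lam L : ℝ}
    {ω : ℕ → V} {w : V} {s : ℕ}
    (h : ∀ t < s, ¬ HmP p ω w (t + 1) < lam / L) : minSR p lam L ω w s = s := by
  refine le_antisymm (minSR_le_self p lam L ω w s) ?_
  have hmem : minSR p lam L ω w s ∈
      ({t : ℕ | HmP p ω w (t + 1) < lam / L} ∪ {s} : Set ℕ) :=
    Nat.sInf_mem ⟨s, Set.mem_union_right _ rfl⟩
  rcases hmem with hm | hm
  · by_contra hlt
    exact h _ (by omega) hm
  · exact le_of_eq (Set.mem_singleton_iff.mp hm).symm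

lemma minSR_succ_eq {V : Type*} (p : V → V → ℝ) {lam L : ℝ}
    {ω : ℕ → V} {w : V} {k : ℕ}
    (h : ∃ t ≤ k, HmP p ω w (t + 1) < lam / L) :
    minSR p lam L ω w (k + 1) = minSR p lam L ω w k := by
  obtain ⟨t, htk, ht⟩ := h
  have h1 : minSR p lam L ω w (k + 1) ≤ t := Nat.sInf_le (Set.mem_union_left _ ht)
  have h2 : minSR p lam L ω w k ≤ t := Nat.sInf_le (Set.mem_union_left _ ht)
  apply le_antisymm
  · have hmem : minSR p lam L ω w k ∈
        ({t : ℕ | HmP p ω w (t + 1) < lam / L} ∪ {k} : Set ℕ) :=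
      Nat.sInf_mem ⟨k, Set.mem_union_right _ rfl⟩
    rcases hmem with hm | hm
    · exact Nat.sInf_le (Set.mem_union_left _ hm)
    · have : minSR p lam L ω w k = k := Set.mem_singleton_iff.mp hm
      omega
  · have hmem : minSR p lam L ω w (k + 1) ∈
        ({t : ℕ | HmP p ω w (t + 1) < lam / L} ∪ {k + 1} : Set ℕ) :=
      Nat.sInf_mem ⟨k + 1, Set.mem_union_right _ rfl⟩
    rcases hmem with hm | hm
    · exact Nat.sInf_le (Set.mem_union_left _ hm)
    · have : minSR p lam L ω w (k + 1) = k + 1 := Set.mem_singleton_iff.mp hm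
      omega

open scoped Classical in
lemma xiTerm_bounds {V : Type*} (p : V → V → ℝ)
    (hp0 : ∀ u x : V, 0 ≤ p u x) (hp1 : ∀ u x : V, p u x ≤ 1)
    {lam L : ℝ} (hlam0 : 0 < lam) (hlam1 : lam ≤ 1) (hL : 1 ≤ L)
    (ω : ℕ → V) (w : V) (hlamw : ∀ u : V, u ≠ w → p u w ≤ 1 - lam) (k : ℕ) :
    -(L / lam ^ 2) * (if ω (k + 1) = w then 1 else 0) ≤
        xiTerm p lam L ω w (k + 1) - xiTerm p lam L ω w k ∧
    xiTerm p lam L ω w (k + 1) - xiTerm p lam L ω w k ≤ (L / lam ^ 2) * p (ω k) w := by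
  classical
  have hL0 : (0:ℝ) < L := one_pos.trans_le hL
  have hC : (0:ℝ) ≤ L / lam ^ 2 := by positivity
  have hind : (0:ℝ) ≤ (if ω (k + 1) = w then (1:ℝ) else 0) := by split <;> norm_num
  by_cases hA : ∃ t ≤ k, HmP p ω w (t + 1) < lam / L
  · rw [xiTerm, xiTerm, minSR_succ_eq p hA, sub_self]
    constructor
    · exact mul_nonpos_of_nonpos_of_nonneg (neg_nonpos.mpr hC) hind
    · exact mul_nonneg hC (hp0 _ _)
  · push_neg at hA
    have h1 : minSR p lam L ω w (k + 1) = k + 1 :=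
      minSR_eq_self p (fun t ht => not_lt.mpr (hA t (by omega)))
    have h0 : minSR p lam L ω w k = k :=
      minSR_eq_self p (fun t ht => not_lt.mpr (hA t (by omega)))
    rw [xiTerm, xiTerm, h1, h0]
    have hHk1 : lam / L ≤ HmP p ω w (k + 1) := hA k le_rfl
    have hHk : lam / L ≤ HmP p ω w k := by
      cases k with
      | zero =>
          have : HmP p ω w 0 = 1 := by simp [HmP]
          rw [this]
          exact div_le_one_of_le₀ (hlam1.trans hL) hL0.le
      | succ j => exact hA j (by omega)
    have hHk0 : 0 < HmP p ω w k := lt_of_lt_of_le (by positivity) hHk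
    have hlamH : lam ≤ L * HmP p ω w k := by
      rw [div_le_iff₀ hL0] at hHk; linarith
    have hprod : HmP p ω w (k + 1) = HmP p ω w k * (1 - p (ω k) w) := HmP_succ p ω w k
    by_cases hhit : ∀ t ≤ k, ω t ≠ w
    · by_cases hnew : ω (k + 1) = w
      · have hI1 : ¬ ∀ t ≤ k + 1, ω t ≠ w := fun h => h (k + 1) le_rfl hnew
        rw [if_neg hI1, if_pos hhit, if_pos hnew]
        have hinv : 1 / HmP p ω w k ≤ L / lam ^ 2 := by
          rw [div_le_div_iff₀ hHk0 (by positivity)]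
          nlinarith
        constructor
        · rw [zero_div, zero_sub, neg_mul, mul_one]
          exact neg_le_neg hinv
        · rw [zero_div, zero_sub]
          have : 0 ≤ 1 / HmP p ω w k := by positivity
          have h2 : 0 ≤ (L / lam ^ 2) * p (ω k) w := mul_nonneg hC (hp0 _ _)
          linarith
      · have hI1 : ∀ t ≤ k + 1, ω t ≠ w := by
          intro t ht
          rcases Nat.lt_or_ge t (k + 1) with h | h
          · exact hhit t (by omega)
          · have : t = k + 1 := by omega
            rw [this]; exact hnew
        rw [if_pos hI1, if_pos hhit]
        set P := p (ω k) w with hPdef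
        have hPl : P ≤ 1 - lam := hlamw (ω k) (hhit k le_rfl)
        have hP0 : 0 ≤ P := hp0 _ _
        have h1P : lam ≤ 1 - P := by linarith
        have h1P0 : 0 < 1 - P := hlam0.trans_le h1P
        have hHk10 : 0 < HmP p ω w (k + 1) := by rw [hprod]; positivity
        have hkey : 1 / HmP p ω w (k + 1) - 1 / HmP p ω w k
            = P / (HmP p ω w k * (1 - P)) := by
          rw [hprod]; field_simp; ring
        rw [hkey]
        constructor
        · have hD : 0 < HmP p ω w k * (1 - P) := by positivity
          have : 0 ≤ P / (HmP p ω w k * (1 - P)) := by positivity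
          have h2 : -(L / lam ^ 2) * (if ω (k + 1) = w then (1:ℝ) else 0) ≤ 0 :=
            mul_nonpos_of_nonpos_of_nonneg (neg_nonpos.mpr hC) hind
          linarith
        · have hden : lam ^ 2 / L ≤ HmP p ω w k * (1 - P) := by
            rw [div_le_iff₀ hL0]
            nlinarith
          calc P / (HmP p ω w k * (1 - P)) ≤ P / (lam ^ 2 / L) := by
                gcongr
            _ = (L / lam ^ 2) * P := by field_simp
    · have hI1 : ¬ ∀ t ≤ k + 1, ω t ≠ w := by
        intro hcon
        exact hhit (fun t ht => hcon t (by omega))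
      rw [if_neg hI1, if_neg hhit, zero_div, zero_div, sub_self]
      constructor
      · exact mul_nonpos_of_nonpos_of_nonneg (neg_nonpos.mpr hC) hind
      · exact mul_nonneg hC (hp0 _ _)

/-- The martingale `ξ_s` has increments bounded by `L/λ²`:
`|ξ_s - ξ_{s-1}| ≤ L/λ²` for all `s ≥ 1`. -/
theorem xiSum_increment_bound {V : Type*} [Fintype V]
    (p : V → V → ℝ) (hp0 : ∀ u x : V, 0 ≤ p u x) (hp1 : ∀ u x : V, p u x ≤ 1)
    (hrow : ∀ u : V, ∑ x : V, p u x = 1)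
    (W : Finset V) (m : ℕ) (hm : W.card = m)
    (lam L : ℝ) (hlam0 : 0 < lam) (hlam1 : lam ≤ 1) (hL : 1 ≤ L)
    (hlamp : ∀ u w : V, w ∈ W → u ≠ w → p u w ≤ 1 - lam)
    (ω : ℕ → V) (hω0 : ω 0 ∉ W) (s : ℕ) (hs : 1 ≤ s) :
    |xiSum p W lam L ω s - xiSum p W lam L ω (s - 1)| ≤ L / lam ^ 2 := by
  classical
  obtain ⟨k, rfl⟩ : ∃ k, s = k + 1 := ⟨s - 1, by omega⟩
  rw [Nat.add_sub_cancel, xiSum_eq_sum_xiTerm, xiSum_eq_sum_xiTerm,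
    ← Finset.sum_sub_distrib]
  have hL0 : (0:ℝ) < L := one_pos.trans_le hL
  have hC : (0:ℝ) ≤ L / lam ^ 2 := by positivity
  have key := fun w (hw : w ∈ W) =>
    xiTerm_bounds p hp0 hp1 hlam0 hlam1 hL ω w (fun u hu => hlamp u w hw hu) k
  rw [abs_le]
  constructor
  · have h1 : ∑ w ∈ W, (-(L / lam ^ 2) * (if ω (k + 1) = w then (1:ℝ) else 0)) ≤
        ∑ w ∈ W, (xiTerm p lam L ω w (k + 1) - xiTerm p lam L ω w k) :=
      Finset.sum_le_sum fun w hw => (key w hw).1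
    have h2 : ∑ w ∈ W, (-(L / lam ^ 2) * (if ω (k + 1) = w then (1:ℝ) else 0)) =
        -(L / lam ^ 2) * ∑ w ∈ W, (if ω (k + 1) = w then (1:ℝ) else 0) := by
      rw [Finset.mul_sum]
    have h3 : ∑ w ∈ W, (if ω (k + 1) = w then (1:ℝ) else 0) =
        if ω (k + 1) ∈ W then (1:ℝ) else 0 := Finset.sum_ite_eq W (ω (k + 1)) fun _ => 1
    have h4 : (if ω (k + 1) ∈ W then (1:ℝ) else 0) ≤ 1 := by split <;> norm_num
    have h5 : (L / lam ^ 2) * (if ω (k + 1) ∈ W then (1:ℝ) else 0) ≤ (L / lam ^ 2) * 1 :=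
      mul_le_mul_of_nonneg_left h4 hC
    rw [h2, h3] at h1
    nlinarith [h1, h5]
  · have h1 : ∑ w ∈ W, (xiTerm p lam L ω w (k + 1) - xiTerm p lam L ω w k) ≤
        ∑ w ∈ W, (L / lam ^ 2) * p (ω k) w :=
      Finset.sum_le_sum fun w hw => (key w hw).2
    have h2 : ∑ w ∈ W, (L / lam ^ 2) * p (ω k) w = (L / lam ^ 2) * ∑ w ∈ W, p (ω k) w := by
      rw [Finset.mul_sum]
    have h3 : ∑ w ∈ W, p (ω k) w ≤ 1 := by
      calc ∑ w ∈ W, p (ω k) w ≤ ∑ w : V, p (ω k) w :=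
            Finset.sum_le_sum_of_subset_of_nonneg (Finset.subset_univ W)
              (fun i _ _ => hp0 _ _)
        _ = 1 := hrow _
    have h4 : (L / lam ^ 2) * ∑ w ∈ W, p (ω k) w ≤ (L / lam ^ 2) * 1 :=
      mul_le_mul_of_nonneg_left h3 hC
    rw [h2] at h1
    linarith
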